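/- Let g : Finset V → ℝ be a nonincreasing α-submodular function with g(∅) = 0, i.e., g(S) - g(S ∪ {k}) ≥ (1-α)(g(T) - g(T ∪ {k})) for all S ⊆ T ⊂ V, k ∈ V, with 0 ≤ α < 1. Then the nondecreasing function F(S) = -g(S) satisfies: the greedy algorithm that iteratively adds the element with the largest marginal gain returns, after n steps, a set S with F(S) ≥ (1 + 1/(1-α))⁻¹ · max_{|T| ≤ n} F(T). -/

import Mathlib

open Finset

theorem greedy_alpha_submodular_guarantee {V : Type*} [Fintype V] [DecidableEq V]
    (g : Finset V → ℝ) (α : ℝ) (hα0 : 0 ≤ α) (hα1 : α < 1)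
    (hg0 : g ∅ = 0)
    (hmono : ∀ (S : Finset V) (k : V), g (insert k S) ≤ g S)
    (hsub : ∀ (S T : Finset V) (k : V), S ⊆ T → T ⊂ Finset.univ →
      g S - g (insert k S) ≥ (1 - α) * (g T - g (insert k T)))
    (n : ℕ) (S : ℕ → Finset V)
    (hS0 : S 0 = ∅)
    (hstep : ∀ i < n, ∃ k ∉ S i, S (i + 1) = insert k (S i) ∧
      ∀ j ∉ S i, -g (insert j (S i)) ≤ -g (insert k (S i))) :
    ∀ T : Finset V, T.card ≤ n →
      -g (S n) ≥ (1 + 1 / (1 - α))⁻¹ * (-g T) := by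
  intro T hT
  have hβpos : (0:ℝ) < 1 - α := by linarith
  -- monotonicity of g under inclusion
  have gmono' : ∀ (C A : Finset V), g (A ∪ C) ≤ g A := by
    intro C
    induction C using Finset.induction_on with
    | empty => intro A; simp
    | @insert c C hc ih =>
      intro A
      rw [Finset.union_insert]
      exact le_trans (hmono _ _) (ih A)
  have gmono : ∀ A B : Finset V, A ⊆ B → g B ≤ g A := by
    intro A B hAB
    have h := gmono' B A
    rwa [Finset.union_eq_right.mpr hAB] at h
  -- chain subsets
  have hsucc : ∀ i, i < n → S i ⊆ S (i+1) := by
    intro i hi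
    obtain ⟨k, _, h, _⟩ := hstep i hi
    rw [h]; exact Finset.subset_insert _ _
  have hchain : ∀ i j, i ≤ j → j ≤ n → S i ⊆ S j := by
    intro i j hij hjn
    induction j, hij using Nat.le_induction with
    | base => exact subset_rfl
    | succ j hij ih => exact (ih (by omega)).trans (hsucc j (by omega))
  -- key telescoping lemma
  have key : ∀ (L : List V) (j : ℕ) (U : Finset V), S n ⊆ U → j + L.length ≤ n →
      (∀ t ∈ L, t ∉ U) → L.Nodup →
      -g (U ∪ L.toFinset) ≤ -g U + (1/(1-α)) * (-g (S (j + L.length)) - -g (S j)) := by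
    intro L
    induction L with
    | nil => intro j U _ _ _ _; simp
    | cons t L' ih =>
      intro j U hUsub hlen hnot hnd
      have htU : t ∉ U := hnot t List.mem_cons_self
      have hjn : j < n := by simp only [List.length_cons] at hlen; omega
      have hSjU : S j ⊆ U := (hchain j n (le_of_lt hjn) le_rfl).trans hUsub
      have hUuniv : U ⊂ Finset.univ := by
        refine Finset.ssubset_univ_iff.mpr ?_
        intro h; exact htU (h ▸ Finset.mem_univ t)
      have hsub1 := hsub (S j) U t hSjU hUuniv
      obtain ⟨k, hk, hSk, hmax⟩ := hstep j hjn
      have htSj : t ∉ S j := fun h => htU (hSjU h)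
      have hgreedy : -g (insert t (S j)) ≤ -g (S (j+1)) := by
        rw [hSk]; exact hmax t htSj
      have hβne : (1-α) ≠ 0 := ne_of_gt hβpos
      have hcpos : (0:ℝ) < 1/(1-α) := by positivity
      have hA : (1-α)*(g U - g (insert t U)) ≤ g (S j) - g (S (j+1)) := by linarith
      have hB := mul_le_mul_of_nonneg_left hA hcpos.le
      rw [← mul_assoc, one_div_mul_cancel hβne, one_mul] at hB
      have step1 : -g (insert t U) ≤ -g U + (1/(1-α)) * (-g (S (j+1)) - -g (S j)) := by
        have hE : (1/(1-α)) * (-g (S (j+1)) - -g (S j)) = (1/(1-α)) * (g (S j) - g (S (j+1))) := by ring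
        rw [hE]; linarith
      have ih' := ih (j+1) (insert t U) (hUsub.trans (Finset.subset_insert _ _))
        (by simp only [List.length_cons] at hlen; omega)
        (by
          intro t' ht'
          simp only [Finset.mem_insert]
          rintro (rfl | h)
          · exact (List.nodup_cons.mp hnd).1 ht'
          · exact hnot t' (List.mem_cons_of_mem _ ht') h)
        (List.nodup_cons.mp hnd).2
      have hset : U ∪ (t :: L').toFinset = insert t U ∪ L'.toFinset := by
        simp [List.toFinset_cons, Finset.union_insert, Finset.insert_union]
      have hlen' : j + (t :: L').length = (j+1) + L'.length := by
        simp [List.length_cons]; omega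
      rw [hset, hlen']
      linarith [ih', step1]
  -- apply the key lemma
  set L := (T \ S n).toList with hL
  have hlenL : L.length = (T \ S n).card := Finset.length_toList _
  have hmn : (T \ S n).card ≤ n := le_trans (Finset.card_le_card Finset.sdiff_subset) hT
  have hkey := key L 0 (S n) subset_rfl (by omega)
    (fun t ht => by
      have : t ∈ T \ S n := (Finset.mem_toList).mp ht
      exact (Finset.mem_sdiff.mp this).2)
    (Finset.nodup_toList _)
  rw [Finset.toList_toFinset] at hkey
  simp only [zero_add, hlenL] at hkey
  rw [hS0, hg0] at hkey
  have hunion : S n ∪ (T \ S n) = S n ∪ T := Finset.union_sdiff_self_eq_union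
  rw [hunion] at hkey
  have h1 : -g T ≤ -g (S n ∪ T) := by
    have := gmono T (S n ∪ T) (Finset.subset_union_right)
    linarith
  have h2 : -g (S ((T \ S n).card)) ≤ -g (S n) := by
    have := gmono _ _ (hchain _ n hmn le_rfl)
    linarith
  have hc : (0:ℝ) < 1/(1-α) := by positivity
  have h3 : (1/(1-α)) * (-g (S ((T \ S n).card))) ≤ (1/(1-α)) * (-g (S n)) :=
    mul_le_mul_of_nonneg_left h2 hc.le
  rw [ge_iff_le, inv_mul_le_iff₀ (by positivity)]
  nlinarith [hkey, h1, h3]
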